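/- Let r be odd, G an r-graph, T a spanning tree of G, l a leaf of T. Let K be a copy of the complete graph K_r on new vertices l_1,…,l_r, and let G' be obtained from G − l and K by joining each vertex of K to one neighbor of l in G (so that each edge at l is replaced by an edge to a distinct K-vertex, counted with multiplicity). Then G' is r-regular and is an r-graph. -/

import Mathlib

open Finset

structure Multigraph (V : Type) where
  mult : Sym2 V → ℕ
  loopless : ∀ v : V, mult s(v, v) = 0

namespace Multigraph

variable {V : Type} [Fintype V] [DecidableEq V]

def degree (G : Multigraph V) (v : V) : ℕ := ∑ u, G.mult s(v, u)

def IsRegular (G : Multigraph V) (r : ℕ) : Prop := ∀ v, G.degree v = r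

def cutsize (G : Multigraph V) (S : Finset V) : ℕ :=
  ∑ x ∈ S, ∑ y ∈ Sᶜ, G.mult s(x, y)

def IsRGraph (G : Multigraph V) (r : ℕ) : Prop :=
  G.IsRegular r ∧ ∀ S : Finset V, Odd S.card → r ≤ G.cutsize S

def reduce (G : Multigraph V) (S : Finset V) {u v : V} (huv : u ≠ v) :
    Multigraph {x : V // x ∉ S} where
  mult p := G.mult (p.map Subtype.val) + (if p.map Subtype.val = s(u, v) then 1 else 0)
  loopless a := by
    simp only [Sym2.map_pair_eq, G.loopless]
    rw [if_neg (fun h => by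
      rcases Sym2.eq_iff.mp h with ⟨rfl, rfl⟩ | ⟨rfl, rfl⟩ <;> exact huv rfl)]

def IsPerfectMatching (G : Multigraph V) (M : Sym2 V → ℕ) : Prop :=
  (∀ p, M p ≤ G.mult p) ∧ ∀ v, ∑ u, M s(v, u) = 1

def degIn (T : Sym2 V → ℕ) (v : V) : ℕ := ∑ u, T s(v, u)

def IsSpanningTree (G : Multigraph V) (T : Sym2 V → ℕ) : Prop :=
  (∀ p, T p ≤ G.mult p) ∧ (∑ p : Sym2 V, T p) + 1 = Fintype.card V ∧
    ∀ u v : V, Relation.ReflTransGen (fun a b => T s(a, b) ≠ 0) u v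

end Multigraph

open Multigraph

variable {V : Type} [Fintype V] [DecidableEq V]

/-- The leaf-expansion of `G` at a vertex `l`: delete `l`, add a copy of the
complete graph `K_r` on new vertices `Sum.inr 0, …, Sum.inr (r-1)`, and join the
`i`-th new vertex to the former neighbour `φ i` of `l` (the function `φ`
enumerates the edge-ends at `l`, with multiplicity). -/
def Multigraph.leafExpand (G : Multigraph V) (r : ℕ) (l : V) (φ : Fin r → V)
    (hφ : ∀ i, φ i ≠ l) : Multigraph ({x : V // x ≠ l} ⊕ Fin r) where
  mult := Sym2.lift ⟨fun a b =>
    match a, b with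
    | Sum.inl a, Sum.inl b => G.mult s(a.1, b.1)
    | Sum.inl a, Sum.inr i => if φ i = a.1 then 1 else 0
    | Sum.inr i, Sum.inl a => if φ i = a.1 then 1 else 0
    | Sum.inr i, Sum.inr j => if i = j then 0 else 1,
    by
      intro a b
      rcases a with a | i <;> rcases b with b | j <;> simp only []
      · rw [Sym2.eq_swap]
      · simp [eq_comm]⟩
  loopless w := by
    rcases w with a | i <;> simp [G.loopless]


variable {r : ℕ} {l : V}

lemma leafExpand_mult_inl_inl (G : Multigraph V) (φ : Fin r → V) (hφl : ∀ i, φ i ≠ l)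
    (a b : {x : V // x ≠ l}) :
    (G.leafExpand r l φ hφl).mult s(Sum.inl a, Sum.inl b) = G.mult s(a.1, b.1) := rfl

lemma leafExpand_mult_inl_inr (G : Multigraph V) (φ : Fin r → V) (hφl : ∀ i, φ i ≠ l)
    (a : {x : V // x ≠ l}) (i : Fin r) :
    (G.leafExpand r l φ hφl).mult s(Sum.inl a, Sum.inr i) = if φ i = a.1 then 1 else 0 := rfl

lemma leafExpand_mult_inr_inl (G : Multigraph V) (φ : Fin r → V) (hφl : ∀ i, φ i ≠ l)
    (a : {x : V // x ≠ l}) (i : Fin r) :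
    (G.leafExpand r l φ hφl).mult s(Sum.inr i, Sum.inl a) = if φ i = a.1 then 1 else 0 := rfl

lemma leafExpand_mult_inr_inr (G : Multigraph V) (φ : Fin r → V) (hφl : ∀ i, φ i ≠ l)
    (i j : Fin r) :
    (G.leafExpand r l φ hφl).mult s(Sum.inr i, Sum.inr j) = if i = j then 0 else 1 := rfl

lemma leafExpand_regular (G : Multigraph V) (hG : G.IsRegular r) (hr : 1 ≤ r)
    (φ : Fin r → V) (hφ : ∀ x : V, (Finset.univ.filter fun i => φ i = x).card = G.mult s(l, x))
    (hφl : ∀ i, φ i ≠ l) : (G.leafExpand r l φ hφl).IsRegular r := by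
  intro w
  have herase : ∀ f : V → ℕ, ∑ b : {x : V // x ≠ l}, f b.1 = ∑ v ∈ Finset.univ.erase l, f v := by
    intro f
    exact (Finset.sum_subtype (Finset.univ.erase l) (by simp) f).symm
  rcases w with a | i
  · have h1 : (G.leafExpand r l φ hφl).degree (Sum.inl a)
        = (∑ b : {x : V // x ≠ l}, G.mult s(a.1, b.1)) + ∑ i : Fin r, if φ i = a.1 then 1 else 0 := by
      rw [degree, Fintype.sum_sum_type]
      simp only [leafExpand_mult_inl_inl, leafExpand_mult_inl_inr]
    rw [h1, herase (fun v => G.mult s(a.1, v))]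
    have h2 : (∑ v ∈ Finset.univ.erase l, G.mult s(a.1, v)) + G.mult s(a.1, l) = r := by
      rw [Finset.sum_erase_add _ _ (Finset.mem_univ l)]
      exact hG a.1
    have h3 : (∑ i : Fin r, if φ i = a.1 then 1 else 0) = G.mult s(a.1, l) := by
      rw [← Finset.card_filter, hφ, Sym2.eq_swap]
    omega
  · have h1 : (G.leafExpand r l φ hφl).degree (Sum.inr i)
        = (∑ b : {x : V // x ≠ l}, if φ i = b.1 then 1 else 0) + ∑ j : Fin r, if i = j then 0 else 1 := by
      rw [degree, Fintype.sum_sum_type]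
      simp only [leafExpand_mult_inr_inl, leafExpand_mult_inr_inr]
    rw [h1, herase (fun v => if φ i = v then 1 else 0)]
    have h2 : (∑ v ∈ Finset.univ.erase l, if φ i = v then 1 else 0) = 1 := by
      rw [Finset.sum_ite_eq]
      simp [hφl i]
    have h3 : (∑ j : Fin r, if i = j then 0 else 1) = r - 1 := by
      have h4 : (∑ j : Fin r, if i = j then (1:ℕ) else 0) = 1 := by
        rw [Finset.sum_ite_eq]; simp
      have h5 : (∑ j : Fin r, if i = j then (0:ℕ) else 1) + (∑ j : Fin r, if i = j then (1:ℕ) else 0)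
          = ∑ _j : Fin r, (1:ℕ) := by
        rw [← Finset.sum_add_distrib]
        exact Finset.sum_congr rfl fun j _ => by split <;> rfl
      simp only [Finset.sum_const, Finset.card_univ, Fintype.card_fin, smul_eq_mul, mul_one] at h5
      omega
    omega

lemma leafExpand_cut (G : Multigraph V) (hG : G.IsRGraph r) (hodd : Odd r)
    (φ : Fin r → V) (hφ : ∀ x : V, (Finset.univ.filter fun i => φ i = x).card = G.mult s(l, x))
    (hφl : ∀ i, φ i ≠ l) (S : Finset ({x : V // x ≠ l} ⊕ Fin r)) (hS : Odd S.card) :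
    r ≤ (G.leafExpand r l φ hφl).cutsize S := by
  classical
  obtain ⟨hreg, hcut⟩ := hG
  set B := S.toLeft with hB
  set A := S.toRight with hA
  set X : Finset V := B.map (Function.Embedding.subtype _) with hXdef
  have hmemX : ∀ x : V, x ∈ X ↔ ∃ h : x ≠ l, (⟨x, h⟩ : {x : V // x ≠ l}) ∈ B := by
    intro x
    simp only [hXdef, Finset.mem_map, Function.Embedding.coe_subtype, Subtype.exists]
    constructor
    · rintro ⟨y, hy, hyB, rfl⟩; exact ⟨hy, hyB⟩
    · rintro ⟨h, hB'⟩; exact ⟨x, h, hB', rfl⟩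
  have hlX : l ∉ X := by
    rw [hmemX]; rintro ⟨h, -⟩; exact h rfl
  have hcomplL : (Sᶜ).toLeft = Bᶜ := by
    ext x; simp [hB]
  have hcomplR : (Sᶜ).toRight = Aᶜ := by
    ext x; simp [hA]
  have hBc : Bᶜ.map (Function.Embedding.subtype _) = Xᶜ.erase l := by
    ext y
    simp only [Finset.mem_map, Function.Embedding.coe_subtype, Subtype.exists,
      Finset.mem_compl, Finset.mem_erase, hmemX]
    constructor
    · rintro ⟨z, hz, hzB, rfl⟩
      exact ⟨hz, fun ⟨h', hB'⟩ => hzB hB'⟩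
    · rintro ⟨hy, hnot⟩
      exact ⟨y, hy, fun hB' => hnot ⟨hy, hB'⟩, rfl⟩
  -- counting lemma
  have hcount : ∀ Y : Finset V, (∑ y ∈ Y, G.mult s(l, y)) = (Finset.univ.filter fun i => φ i ∈ Y).card := by
    intro Y
    rw [Finset.card_filter]
    calc ∑ y ∈ Y, G.mult s(l, y) = ∑ y ∈ Y, ∑ i : Fin r, if φ i = y then 1 else 0 := by
          refine Finset.sum_congr rfl fun y _ => ?_
          rw [← hφ y, Finset.card_filter]
      _ = ∑ i : Fin r, ∑ y ∈ Y, if φ i = y then 1 else 0 := Finset.sum_comm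
      _ = ∑ i : Fin r, if φ i ∈ Y then 1 else 0 := by
          exact Finset.sum_congr rfl fun i _ => Finset.sum_ite_eq Y (φ i) (fun _ => 1)
  -- filter splitting over A and its complement
  have hsplit : ∀ (P : Fin r → Prop) [DecidablePred P],
      (Finset.univ.filter P).card = (A.filter P).card + (Aᶜ.filter P).card := by
    intro P _
    rw [← Finset.card_union_of_disjoint (Finset.disjoint_filter_filter disjoint_compl_right),
      ← Finset.filter_union, Finset.union_compl]
  set c1 := (A.filter fun i => φ i ∈ X).card with hc1
  set c2 := (A.filter fun i => φ i ∉ X).card with hc2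
  set c3 := (Aᶜ.filter fun i => φ i ∈ X).card with hc3
  set c4 := (Aᶜ.filter fun i => φ i ∉ X).card with hc4
  set a := A.card with ha
  have har : a ≤ r := by
    have := Finset.card_le_univ A
    simpa using this
  have hc12 : c1 + c2 = a := by
    rw [hc1, hc2, Finset.card_filter_add_card_filter_not]
  have hc34 : c3 + c4 = r - a := by
    rw [hc3, hc4, Finset.card_filter_add_card_filter_not, Finset.card_compl]
    simp [ha]
  -- decompose the cutsize of the expanded graph
  set base := ∑ x ∈ X, ∑ y ∈ Xᶜ.erase l, G.mult s(x, y) with hbase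
  have hsumB : ∀ f : V → ℕ, (∑ x ∈ B, f x.1) = ∑ x ∈ X, f x := by
    intro f
    rw [hXdef, Finset.sum_map]
    rfl
  have hsumBc : ∀ f : V → ℕ, (∑ x ∈ Bᶜ, f x.1) = ∑ x ∈ Xᶜ.erase l, f x := by
    intro f
    rw [← hBc, Finset.sum_map]
    rfl
  have hcut' : (G.leafExpand r l φ hφl).cutsize S
      = (base + c3) + (c2 + a * (r - a)) := by
    have hSc : Sᶜ = Bᶜ.disjSum Aᶜ := by
      rw [← hcomplL, ← hcomplR, Finset.toLeft_disjSum_toRight]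
    have hS' : S = B.disjSum A := by
      rw [hB, hA, Finset.toLeft_disjSum_toRight]
    rw [cutsize, hSc, hS', Finset.sum_disjSum]
    congr 1
    · -- left part
      have : ∀ x ∈ B, (∑ y ∈ Bᶜ.disjSum Aᶜ, (G.leafExpand r l φ hφl).mult s(Sum.inl x, y))
          = (∑ y ∈ Bᶜ, G.mult s(x.1, y.1)) + ∑ j ∈ Aᶜ, if φ j = x.1 then 1 else 0 := by
        intro x _
        rw [Finset.sum_disjSum]
        simp only [leafExpand_mult_inl_inl, leafExpand_mult_inl_inr]
      rw [Finset.sum_congr rfl this, Finset.sum_add_distrib]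
      congr 1
      · rw [hbase]
        rw [hsumB (fun v => ∑ y ∈ Bᶜ, G.mult s(v, y.1))]
        exact Finset.sum_congr rfl fun x _ => hsumBc (fun v => G.mult s(x, v))
      · rw [hc3, Finset.sum_comm]
        rw [Finset.card_filter]
        refine Finset.sum_congr rfl fun j _ => ?_
        rw [hsumB (fun v => if φ j = v then 1 else 0)]
        exact Finset.sum_ite_eq X (φ j) (fun _ => 1)
    · -- right part
      have : ∀ i ∈ A, (∑ y ∈ Bᶜ.disjSum Aᶜ, (G.leafExpand r l φ hφl).mult s(Sum.inr i, y))
          = (if φ i ∉ X then 1 else 0) + ∑ j ∈ Aᶜ, if i = j then 0 else 1 := by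
        intro i hiA
        rw [Finset.sum_disjSum]
        simp only [leafExpand_mult_inr_inl, leafExpand_mult_inr_inr]
        congr 1
        rw [hsumBc (fun v => if φ i = v then 1 else 0), Finset.sum_ite_eq (Xᶜ.erase l) (φ i) (fun _ => 1)]
        congr 1
        simp [Finset.mem_erase, hφl i]
      rw [Finset.sum_congr rfl this, Finset.sum_add_distrib]
      congr 1
      · rw [hc2, Finset.card_filter]
      · have h1 : ∀ i ∈ A, (∑ j ∈ Aᶜ, if i = j then 0 else 1) = (r - a : ℕ) := by
          intro i hiA
          have : ∀ j ∈ Aᶜ, (if i = j then (0:ℕ) else 1) = 1 := by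
            intro j hj
            rw [if_neg]
            rintro rfl
            exact (Finset.mem_compl.mp hj) hiA
          rw [Finset.sum_congr rfl this, Finset.sum_const, smul_eq_mul, mul_one, Finset.card_compl]
          simp [ha]
        rw [Finset.sum_congr rfl h1, Finset.sum_const, smul_eq_mul]
  -- cutsize of X in G
  have hXcut : G.cutsize X = base + (c1 + c3) := by
    rw [cutsize, hbase]
    have : ∀ x ∈ X, (∑ y ∈ Xᶜ, G.mult s(x, y))
        = (∑ y ∈ Xᶜ.erase l, G.mult s(x, y)) + G.mult s(l, x) := by
      intro x _
      rw [Sym2.eq_swap (a := l)]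
      exact (Finset.sum_erase_add _ _ (Finset.mem_compl.mpr hlX)).symm
    rw [Finset.sum_congr rfl this, Finset.sum_add_distrib]
    congr 1
    rw [hcount X, hsplit]
  -- cutsize of insert l X in G
  have hlXcut : G.cutsize (insert l X) = (c2 + c4) + base := by
    rw [cutsize, Finset.compl_insert, Finset.sum_insert hlX]
    congr 1
    · rw [hcount (Xᶜ.erase l), hsplit (fun i => φ i ∈ Xᶜ.erase l)]
      have he : ∀ s : Finset (Fin r), s.filter (fun i => φ i ∈ Xᶜ.erase l) = s.filter (fun i => φ i ∉ X) := by
        intro s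
        refine Finset.filter_congr fun i _ => ?_
        simp [Finset.mem_erase, hφl i]
      rw [he, he, ← hc2, ← hc4]
  -- parity bookkeeping
  have hcardS : B.card + a = S.card := by
    rw [ha, hB, hA]; exact Finset.card_toLeft_add_card_toRight
  have hXcard : X.card = B.card := Finset.card_map _
  have hc1a : c1 ≤ a := by rw [hc1, ha]; exact Finset.card_filter_le _ _
  have hc4a : c4 ≤ r - a := by omega
  rcases Nat.even_or_odd a with hae | hao
  · -- a even : X has odd card
    have haner : a ≠ r := fun h => (Nat.not_even_iff_odd.mpr hodd) (h ▸ hae)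
    have hXodd : Odd X.card := by
      rw [hXcard]
      rcases hS with ⟨k, hk⟩
      rcases hae with ⟨m, hm⟩
      exact ⟨k - m, by omega⟩
    have hge : r ≤ base + (c1 + c3) := hXcut ▸ hcut X hXodd
    have hbound : a ≤ a * (r - a) := by
      rcases Nat.eq_zero_or_pos a with h | h
      · omega
      · exact Nat.le_mul_of_pos_right a (by omega)
    rw [hcut']
    linarith [hge, hc1a, hbound]
  · -- a odd : insert l X has odd card
    have hXeven : Even X.card := by
      rw [hXcard]
      rcases hS with ⟨k, hk⟩
      rcases hao with ⟨m, hm⟩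
      refine ⟨k - m, ?_⟩
      omega
    have hinsodd : Odd (insert l X).card := by
      rw [Finset.card_insert_of_notMem hlX]
      rcases hXeven with ⟨m, hm⟩
      exact ⟨m, by omega⟩
    have hge : r ≤ (c2 + c4) + base := hlXcut ▸ hcut _ hinsodd
    have hbound : r - a ≤ a * (r - a) := by
      rcases hao with ⟨m, hm⟩
      exact Nat.le_mul_of_pos_left (r - a) (by omega)
    rw [hcut']
    linarith [hge, hc4a, hbound]
/-- **Leaf-expansion.**  Let `r` be odd, `G` an `r`-graph with spanning tree `T`,
and `l` a leaf of `T`.  Replace `l` by a copy of `K_r`, joining each new vertex to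
one former neighbour of `l` (one per edge at `l`, counted with multiplicity, as
recorded by `φ`).  The resulting graph `G'` is `r`-regular and is an `r`-graph. -/
theorem leaf_expansion_is_r_graph {V : Type} [Fintype V] [DecidableEq V]
    (r : ℕ) (hodd : Odd r) (G : Multigraph V) (hG : G.IsRGraph r)
    (T : Sym2 V → ℕ) (hT : G.IsSpanningTree T) (l : V) (hleaf : degIn T l = 1)
    (φ : Fin r → V) (hφ : ∀ x : V, (Finset.univ.filter fun i => φ i = x).card = G.mult s(l, x))
    (hφl : ∀ i, φ i ≠ l) :
    (G.leafExpand r l φ hφl).IsRegular r ∧ (G.leafExpand r l φ hφl).IsRGraph r := by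
  have hreg := leafExpand_regular G hG.1 hodd.pos φ hφ hφl
  exact ⟨hreg, hreg, fun S hS => leafExpand_cut G hG hodd φ hφ hφl S hS⟩
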